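/- Fix n ≥ 2 and two families q = (q_{ij}) with q_{ii} = 1, q_{ji} = q_{ij}^{-1}, |q_{ij}| = 1 (and similarly the constant family 1 with all entries equal to 1). On ℓ²({1, …, n}^m), define W^{m,q} on basis vectors by W^{m,q} e_y = q^{σ^{-1}}(x) e_y, where x is the nondecreasing rearrangement of the word y and σ ∈ S_m is any permutation with y_i = x_{σ(i)} for all i. Then: (i) the scalar q^{σ^{-1}}(x) does not depend on the choice of such σ, so W^{m,q} is a well-defined diagonal unitary; and (ii) W^{m,q} P_m^{(1)} = P_m^{(q)} W^{m,q}, where P_m^{(1)} = (1/m!) Σ_σ U^{m,1}_σ is the symmetrization projection and P_m^{(q)} = (1/m!) Σ_σ U^{m,q}_σ is the q-symmetrization projection. -/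

import Mathlib

open scoped BigOperators

/-- `q^σ(x) = ∏ q_{x_{σ⁻¹(k)} x_{σ⁻¹(i)}}`, the product over all pairs `i < k`
with `σ⁻¹(i) > σ⁻¹(k)`. -/
noncomputable def qSigma {n : ℕ} (q : Fin n → Fin n → ℂ) {m : ℕ} (x : Fin m → Fin n)
    (σ : Equiv.Perm (Fin m)) : ℂ :=
  ∏ p ∈ Finset.univ.filter (fun p : Fin m × Fin m => p.1 < p.2 ∧ σ⁻¹ p.2 < σ⁻¹ p.1),
    q (x (σ⁻¹ p.2)) (x (σ⁻¹ p.1))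

/-- The operator `U^{m,q}_σ` on `ℓ²({1,…,n}^m)` with `U^{m,q}_σ e_x = q^σ(x) e_{x ∘ σ⁻¹}`. -/
noncomputable def Uop {n : ℕ} (q : Fin n → Fin n → ℂ) (m : ℕ) (σ : Equiv.Perm (Fin m)) :
    EuclideanSpace ℂ (Fin m → Fin n) →L[ℂ] EuclideanSpace ℂ (Fin m → Fin n) :=
  LinearMap.toContinuousLinearMap
    { toFun := fun f => (WithLp.toLp 2 (fun (y : Fin m → Fin n) =>
          qSigma q (fun i => y (σ i)) σ * f (fun i => y (σ i))) :
        EuclideanSpace ℂ (Fin m → Fin n))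
      map_add' := by
        intro f g
        ext y
        simp [PiLp.add_apply, mul_add]
      map_smul' := by
        intro c f
        ext y
        simp [PiLp.smul_apply, smul_eq_mul] <;> ring }

/-- The `q`-symmetrization operator `P_m = (1/m!) Σ_σ U^{m,q}_σ`. -/
noncomputable def Pm {n : ℕ} (q : Fin n → Fin n → ℂ) (m : ℕ) :
    EuclideanSpace ℂ (Fin m → Fin n) →L[ℂ] EuclideanSpace ℂ (Fin m → Fin n) :=
  ((m.factorial : ℂ))⁻¹ • ∑ σ : Equiv.Perm (Fin m), Uop q m σ

/-! ### Auxiliary definitions and lemmas -/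

/-- The set of ordered pairs `(i,k)` with `i < k`. -/
def pairSet (m : ℕ) : Finset (Fin m × Fin m) :=
  Finset.univ.filter (fun p : Fin m × Fin m => p.1 < p.2)

/-- The diagonal coefficient `c(y) = ∏_{i<k, y_k < y_i} q_{y_k y_i}`. -/
noncomputable def cCoef {n : ℕ} (q : Fin n → Fin n → ℂ) {m : ℕ} (y : Fin m → Fin n) : ℂ :=
  ∏ p ∈ Finset.univ.filter (fun p : Fin m × Fin m => p.1 < p.2 ∧ y p.2 < y p.1),
    q (y p.2) (y p.1)

lemma cCoef_eq_prod {n m : ℕ} (q : Fin n → Fin n → ℂ) (y : Fin m → Fin n) :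
    cCoef q y = ∏ p ∈ pairSet m, if y p.2 < y p.1 then q (y p.2) (y p.1) else 1 := by
  rw [cCoef, pairSet, Finset.prod_filter, Finset.prod_filter]
  refine Finset.prod_congr rfl fun p _ => ?_
  by_cases h1 : p.1 < p.2 <;> by_cases h2 : y p.2 < y p.1 <;> simp [h1, h2]

lemma qSigma_eq_prod {n m : ℕ} (q : Fin n → Fin n → ℂ) (x : Fin m → Fin n)
    (σ : Equiv.Perm (Fin m)) :
    qSigma q x σ =
      ∏ p ∈ pairSet m, if σ⁻¹ p.2 < σ⁻¹ p.1 then q (x (σ⁻¹ p.2)) (x (σ⁻¹ p.1)) else 1 := by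
  rw [qSigma, pairSet, Finset.prod_filter, Finset.prod_filter]
  refine Finset.prod_congr rfl fun p _ => ?_
  by_cases h1 : p.1 < p.2 <;> by_cases h2 : σ⁻¹ p.2 < σ⁻¹ p.1 <;> simp [h1, h2]

lemma q_ne_zero {n : ℕ} {q : Fin n → Fin n → ℂ} (hq3 : ∀ i j, ‖q i j‖ = 1) (i j : Fin n) :
    q i j ≠ 0 := by
  intro h
  have := hq3 i j
  rw [h] at this
  simp at this

/-- Part (i): `qSigma q x σ⁻¹ = cCoef q y` when `x` is monotone and `y = x ∘ σ`. -/
lemma qSigma_inv_eq_cCoef {n m : ℕ} (q : Fin n → Fin n → ℂ)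
    (hq1 : ∀ i, q i i = 1) (x y : Fin m → Fin n) (hx : Monotone x)
    (σ : Equiv.Perm (Fin m)) (hy : ∀ i, y i = x (σ i)) :
    qSigma q x σ⁻¹ = cCoef q y := by
  rw [qSigma, cCoef]
  simp only [inv_inv]
  have hsub : Finset.univ.filter (fun p : Fin m × Fin m => p.1 < p.2 ∧ y p.2 < y p.1) ⊆
      Finset.univ.filter (fun p : Fin m × Fin m => p.1 < p.2 ∧ σ p.2 < σ p.1) := by
    intro p hp
    simp only [Finset.mem_filter, Finset.mem_univ, true_and] at hp ⊢
    refine ⟨hp.1, ?_⟩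
    by_contra h
    have : x (σ p.2) ≥ x (σ p.1) := hx (not_lt.mp h)
    rw [← hy p.1, ← hy p.2] at this
    exact absurd hp.2 (not_lt.mpr this)
  rw [← Finset.prod_subset hsub ?h1]
  · refine Finset.prod_congr rfl fun p _ => by rw [← hy p.1, ← hy p.2]
  · intro p hp hnp
    simp only [Finset.mem_filter, Finset.mem_univ, true_and] at hp hnp
    have h2 : ¬ y p.2 < y p.1 := fun h => hnp ⟨hp.1, h⟩
    have hle : x (σ p.2) ≤ x (σ p.1) := hx (le_of_lt hp.2)
    rw [← hy p.1, ← hy p.2] at hle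
    have heq : y p.2 = y p.1 := le_antisymm hle (not_lt.mp h2)
    rw [← hy p.1, ← hy p.2, hy p.1, hy p.2, ← hy p.1, ← hy p.2, heq, hq1]

/-- The key cocycle identity: `c(y) = qSigma q (y∘σ) σ * c(y∘σ)`. -/
lemma cCoef_cocycle {n m : ℕ} (q : Fin n → Fin n → ℂ)
    (hq1 : ∀ i, q i i = 1) (hq2 : ∀ i j, q j i = (q i j)⁻¹) (hq3 : ∀ i j, ‖q i j‖ = 1)
    (y : Fin m → Fin n) (σ : Equiv.Perm (Fin m)) :
    cCoef q y = qSigma q (fun i => y (σ i)) σ * cCoef q (fun i => y (σ i)) := by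
  rw [cCoef_eq_prod, cCoef_eq_prod, qSigma_eq_prod]
  have hA : (∏ p ∈ pairSet m,
      if σ⁻¹ p.2 < σ⁻¹ p.1 then q (y (σ (σ⁻¹ p.2))) (y (σ (σ⁻¹ p.1))) else 1) =
      ∏ p ∈ pairSet m, if σ⁻¹ p.2 < σ⁻¹ p.1 then q (y p.2) (y p.1) else 1 := by
    refine Finset.prod_congr rfl fun p _ => by simp
  rw [hA]
  -- reindex the second factor
  have hB : (∏ p ∈ pairSet m,
      if y (σ p.2) < y (σ p.1) then q (y (σ p.2)) (y (σ p.1)) else 1) =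
      ∏ p ∈ pairSet m,
        if σ⁻¹ p.1 < σ⁻¹ p.2 then (if y p.2 < y p.1 then q (y p.2) (y p.1) else 1)
        else (if y p.1 < y p.2 then q (y p.1) (y p.2) else 1) := by
    refine Finset.prod_nbij'
      (fun p => if σ p.1 < σ p.2 then (σ p.1, σ p.2) else (σ p.2, σ p.1))
      (fun p => if σ⁻¹ p.1 < σ⁻¹ p.2 then (σ⁻¹ p.1, σ⁻¹ p.2) else (σ⁻¹ p.2, σ⁻¹ p.1))
      ?_ ?_ ?_ ?_ ?_
    · intro p hp
      simp only [pairSet, Finset.mem_filter, Finset.mem_univ, true_and] at hp ⊢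
      by_cases h : σ p.1 < σ p.2
      · simpa [h] using h
      · have hne : σ p.1 ≠ σ p.2 := fun he => absurd (σ.injective he) (ne_of_lt hp)
        simpa [h] using lt_of_le_of_ne (not_lt.mp h) (Ne.symm hne)
    · intro p hp
      simp only [pairSet, Finset.mem_filter, Finset.mem_univ, true_and] at hp ⊢
      by_cases h : σ⁻¹ p.1 < σ⁻¹ p.2
      · rw [if_pos h]; exact h
      · have hne : σ⁻¹ p.1 ≠ σ⁻¹ p.2 := fun he => by
          have := congrArg σ he; simp at this; exact absurd this (ne_of_lt hp)
        rw [if_neg h]; exact lt_of_le_of_ne (not_lt.mp h) (Ne.symm hne)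
    · intro p hp
      simp only [pairSet, Finset.mem_filter, Finset.mem_univ, true_and] at hp
      by_cases h : σ p.1 < σ p.2
      · simp [h, hp]
      · simp [h, not_lt.mpr (le_of_lt hp)]
    · intro p hp
      simp only [pairSet, Finset.mem_filter, Finset.mem_univ, true_and] at hp
      by_cases h : σ⁻¹ p.1 < σ⁻¹ p.2
      · rw [if_pos h]; simp [hp]
      · rw [if_neg h]; simp [not_lt.mpr (le_of_lt hp)]
    · intro p hp
      simp only [pairSet, Finset.mem_filter, Finset.mem_univ, true_and] at hp
      by_cases h : σ p.1 < σ p.2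
      · simp only [if_pos h, Equiv.Perm.inv_def, Equiv.symm_apply_apply]
        rw [if_pos hp]
      · simp only [if_neg h, Equiv.Perm.inv_def, Equiv.symm_apply_apply]
        rw [if_neg (not_lt.mpr (le_of_lt hp))]
  rw [hB, ← Finset.prod_mul_distrib]
  refine Finset.prod_congr rfl fun p hp => ?_
  simp only [pairSet, Finset.mem_filter, Finset.mem_univ, true_and] at hp
  have hne : σ⁻¹ p.1 ≠ σ⁻¹ p.2 := fun he => by
    have := congrArg σ he; simp at this; exact absurd this (ne_of_lt hp)
  by_cases h : σ⁻¹ p.1 < σ⁻¹ p.2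
  · simp only [Equiv.Perm.inv_def] at h; simp [h, not_lt.mpr (le_of_lt h)]
  · have h' : σ⁻¹ p.2 < σ⁻¹ p.1 := lt_of_le_of_ne (not_lt.mp h) (Ne.symm hne)
    simp only [h, if_false, h', if_true]
    rcases lt_trichotomy (y p.1) (y p.2) with hy | hy | hy
    · rw [if_neg (not_lt.mpr (le_of_lt hy)), if_pos hy, hq2]
      exact (inv_mul_cancel₀ (q_ne_zero hq3 _ _)).symm
    · simp [hy, hq1]
    · rw [if_pos hy, if_neg (not_lt.mpr (le_of_lt hy)), mul_one]

lemma norm_cCoef {n m : ℕ} {q : Fin n → Fin n → ℂ} (hq3 : ∀ i j, ‖q i j‖ = 1)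
    (y : Fin m → Fin n) : ‖cCoef q y‖ = 1 := by
  rw [cCoef]
  rw [norm_prod]
  exact Finset.prod_eq_one fun p _ => hq3 _ _

lemma conj_mul_cCoef {n m : ℕ} {q : Fin n → Fin n → ℂ} (hq3 : ∀ i j, ‖q i j‖ = 1)
    (y : Fin m → Fin n) : (starRingEnd ℂ) (cCoef q y) * cCoef q y = 1 := by
  have h := norm_cCoef hq3 y
  have : Complex.normSq (cCoef q y) = 1 := by
    rw [← Complex.sq_norm] at *
    rw [h]; norm_num
  calc (starRingEnd ℂ) (cCoef q y) * cCoef q y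
      = (Complex.normSq (cCoef q y) : ℂ) := by rw [mul_comm, Complex.mul_conj]
    _ = 1 := by rw [this]; norm_num

/-- The diagonal operator `W`. -/
noncomputable def Wop {n : ℕ} (q : Fin n → Fin n → ℂ) (m : ℕ) :
    EuclideanSpace ℂ (Fin m → Fin n) →L[ℂ] EuclideanSpace ℂ (Fin m → Fin n) :=
  LinearMap.toContinuousLinearMap
    { toFun := fun f => (WithLp.toLp 2 (fun (y : Fin m → Fin n) => cCoef q y * f y) : EuclideanSpace ℂ (Fin m → Fin n))
      map_add' := by
        intro f g
        ext y
        simp [PiLp.add_apply, mul_add]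
      map_smul' := by
        intro c f
        ext y
        simp [PiLp.smul_apply, smul_eq_mul]
        ring }

lemma Wop_apply {n : ℕ} (q : Fin n → Fin n → ℂ) (m : ℕ)
    (f : EuclideanSpace ℂ (Fin m → Fin n)) (y : Fin m → Fin n) :
    Wop q m f y = cCoef q y * f y := rfl

/-- The conjugate diagonal operator. -/
noncomputable def Wop' {n : ℕ} (q : Fin n → Fin n → ℂ) (m : ℕ) :
    EuclideanSpace ℂ (Fin m → Fin n) →L[ℂ] EuclideanSpace ℂ (Fin m → Fin n) :=
  LinearMap.toContinuousLinearMap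
    { toFun := fun f => (WithLp.toLp 2 (fun (y : Fin m → Fin n) => (starRingEnd ℂ) (cCoef q y) * f y) :
        EuclideanSpace ℂ (Fin m → Fin n))
      map_add' := by
        intro f g
        ext y
        simp [PiLp.add_apply, mul_add]
      map_smul' := by
        intro c f
        ext y
        simp [PiLp.smul_apply, smul_eq_mul]
        ring }

lemma star_Wop {n : ℕ} (q : Fin n → Fin n → ℂ) (m : ℕ) :
    star (Wop q m) = Wop' q m := by
  rw [ContinuousLinearMap.star_eq_adjoint]
  symm
  rw [ContinuousLinearMap.eq_adjoint_iff]
  intro f g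
  simp only [PiLp.inner_apply, RCLike.inner_apply]
  refine Finset.sum_congr rfl fun y _ => ?_
  show g y * (starRingEnd ℂ) ((starRingEnd ℂ) (cCoef q y) * f y)
      = (cCoef q y * g y) * (starRingEnd ℂ) (f y)
  simp [mul_comm, mul_assoc, mul_left_comm]

lemma qSigma_one {n m : ℕ} (x : Fin m → Fin n) (σ : Equiv.Perm (Fin m)) :
    qSigma (fun _ _ => (1 : ℂ)) x σ = 1 := by
  rw [qSigma]; exact Finset.prod_eq_one fun p _ => rfl

/-- (i) The scalar `q^{σ⁻¹}(x)` attached to a word `y` (with `x` the nondecreasing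
rearrangement of `y` and `y_i = x_{σ(i)}`) does not depend on the choice of `σ`, so the
diagonal operator `W^{m,q} e_y = q^{σ⁻¹}(x) e_y` is well defined; it is a diagonal unitary
and (ii) it intertwines the symmetrization projection with the `q`-symmetrization
projection: `W^{m,q} P_m^{(1)} = P_m^{(q)} W^{m,q}`. -/
theorem stmt12 {n : ℕ} (hn : 2 ≤ n) (q : Fin n → Fin n → ℂ)
    (hq1 : ∀ i, q i i = 1) (hq2 : ∀ i j, q j i = (q i j)⁻¹) (hq3 : ∀ i j, ‖q i j‖ = 1)
    (m : ℕ) :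
    -- (i) independence of the choice of `σ`
    (∀ (x y : Fin m → Fin n), Monotone x →
      ∀ σ σ' : Equiv.Perm (Fin m),
        (∀ i, y i = x (σ i)) → (∀ i, y i = x (σ' i)) →
        qSigma q x σ⁻¹ = qSigma q x σ'⁻¹) ∧
    -- the diagonal operator `W^{m,q}` exists, is unitary, and intertwines the projections
    (∃ W : EuclideanSpace ℂ (Fin m → Fin n) →L[ℂ] EuclideanSpace ℂ (Fin m → Fin n),
      (∀ (y x : Fin m → Fin n) (σ : Equiv.Perm (Fin m)), Monotone x →
        (∀ i, y i = x (σ i)) →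
        W (EuclideanSpace.single y 1) = qSigma q x σ⁻¹ • EuclideanSpace.single y (1 : ℂ)) ∧
      star W * W = 1 ∧ W * star W = 1 ∧
      W * Pm (fun _ _ => (1 : ℂ)) m = Pm q m * W) := by
  constructor
  · intro x y hx σ σ' hy hy'
    rw [qSigma_inv_eq_cCoef q hq1 x y hx σ hy, qSigma_inv_eq_cCoef q hq1 x y hx σ' hy']
  · refine ⟨Wop q m, ?_, ?_, ?_, ?_⟩
    · intro y x σ hx hy
      rw [qSigma_inv_eq_cCoef q hq1 x y hx σ hy]
      ext z
      show cCoef q z * (EuclideanSpace.single y (1:ℂ)) z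
          = (cCoef q y • EuclideanSpace.single y (1:ℂ)) z
      rw [PiLp.smul_apply, smul_eq_mul, EuclideanSpace.single_apply]
      by_cases h : z = y
      · subst h; simp
      · simp [h]
    · rw [star_Wop]
      ext f z
      show (starRingEnd ℂ) (cCoef q z) * (cCoef q z * f z) = f z
      rw [← mul_assoc, conj_mul_cCoef hq3, one_mul]
    · rw [star_Wop]
      ext f z
      show cCoef q z * ((starRingEnd ℂ) (cCoef q z) * f z) = f z
      rw [← mul_assoc, mul_comm (cCoef q z), conj_mul_cCoef hq3, one_mul]
    · rw [Pm, Pm, mul_smul_comm, smul_mul_assoc]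
      congr 1
      rw [Finset.mul_sum, Finset.sum_mul]
      refine Finset.sum_congr rfl fun σ _ => ?_
      refine ContinuousLinearMap.ext fun f => ?_
      ext z
      show cCoef q z * (qSigma (fun _ _ => (1:ℂ)) (fun i => z (σ i)) σ *
          f (fun i => z (σ i)))
        = qSigma q (fun i => z (σ i)) σ * (cCoef q (fun i => z (σ i)) * f (fun i => z (σ i)))
      rw [qSigma_one, one_mul, ← mul_assoc, ← cCoef_cocycle q hq1 hq2 hq3 z σ]
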